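/- Let Ω be a finite probability space and Z_I, Z_V finite-valued random variables. The quantity E_{(a,b) ~ joint}[ log P(Z_I = a | Z_V = b) ] - E_{a ~ marginal of Z_I} E_{b ~ marginal of Z_V}[ log P(Z_I = a | Z_V = b) ] equals I(Z_I; Z_V) + KL( P_{Z_I} ⊗ P_{Z_V} ∥ P_{(Z_I, Z_V)} restricted appropriately ) when all involved conditional probabilities are positive; in particular it is an upper bound on the mutual information I(Z_I; Z_V). -/
import Mathlib


open scoped BigOperators Classical

noncomputable def Pr {Ω : Type*} [Fintype Ω] (p : Ω → ℝ) (E : Set Ω) : ℝ :=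
  ∑ ω, if ω ∈ E then p ω else 0

/-- The CLUB upper bound on mutual information (vCLUB, Eq. (15)): with the true
conditional distribution `P(Z_I = a | Z_V = b)`, the gap between the expected conditional
log-likelihood under the joint and under the product of marginals equals
`I(Z_I; Z_V) + KL(P_{Z_I} ⊗ P_{Z_V} ∥ P_{(Z_I,Z_V)})`; in particular it upper-bounds
the mutual information. All joint probabilities are assumed strictly positive. -/
theorem stmt13 {Ω S : Type*} [Fintype Ω] [Fintype S]
    (p : Ω → ℝ) (hp : ∀ ω, 0 ≤ p ω) (hsum : ∑ ω, p ω = 1)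
    (Z_I Z_V : Ω → S)
    (hjointpos : ∀ a b : S, 0 < Pr p {ω | Z_I ω = a ∧ Z_V ω = b}) :
    (let j : S → S → ℝ := fun a b => Pr p {ω | Z_I ω = a ∧ Z_V ω = b}
     let mI : S → ℝ := fun a => Pr p {ω | Z_I ω = a}
     let mV : S → ℝ := fun b => Pr p {ω | Z_V ω = b}
     let c : S → S → ℝ := fun a b => j a b / mV b
     let club : ℝ := (∑ a : S, ∑ b : S, j a b * Real.log (c a b))
        - ∑ a : S, ∑ b : S, mI a * mV b * Real.log (c a b)
     let mi : ℝ := ∑ a : S, ∑ b : S, j a b * Real.log (j a b / (mI a * mV b))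
     let kl : ℝ := ∑ a : S, ∑ b : S, (mI a * mV b) * Real.log ((mI a * mV b) / j a b)
     club = mi + kl ∧ mi ≤ club) := by
  intro j mI mV c club mi kl
  have hΩ : Nonempty Ω := by
    by_contra h
    rw [not_nonempty_iff] at h
    simp [Finset.univ_eq_empty] at hsum
  obtain ⟨ω0⟩ := hΩ
  haveI hS : Nonempty S := ⟨Z_V ω0⟩
  have hmI : ∀ a, mI a = ∑ b, j a b := by
    intro a
    simp only [mI, j, Pr]
    rw [Finset.sum_comm]
    refine Finset.sum_congr rfl fun ω _ => ?_
    simp only [Set.mem_setOf_eq]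
    by_cases h1 : Z_I ω = a
    · simp [h1, Finset.sum_ite_eq]
    · simp [h1]
  have hmV : ∀ b, mV b = ∑ a, j a b := by
    intro b
    simp only [mV, j, Pr]
    rw [Finset.sum_comm]
    refine Finset.sum_congr rfl fun ω _ => ?_
    simp only [Set.mem_setOf_eq]
    by_cases h1 : Z_V ω = b
    · simp [h1, Finset.sum_ite_eq]
    · simp [h1]
  have hI1 : ∑ a, mI a = 1 := by
    simp only [mI, Pr]
    rw [Finset.sum_comm, ← hsum]
    refine Finset.sum_congr rfl fun ω _ => ?_
    simp [Set.mem_setOf_eq, Finset.sum_ite_eq]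
  have hV1 : ∑ b, mV b = 1 := by
    simp only [mV, Pr]
    rw [Finset.sum_comm, ← hsum]
    refine Finset.sum_congr rfl fun ω _ => ?_
    simp [Set.mem_setOf_eq, Finset.sum_ite_eq]
  have jpos : ∀ a b, 0 < j a b := hjointpos
  have mIpos : ∀ a, 0 < mI a := by
    intro a
    rw [hmI]
    exact Finset.sum_pos (fun b _ => jpos a b) Finset.univ_nonempty
  have mVpos : ∀ b, 0 < mV b := by
    intro b
    rw [hmV]
    exact Finset.sum_pos (fun a _ => jpos a b) Finset.univ_nonempty
  have hj1 : ∑ a, ∑ b, j a b = 1 := by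
    rw [← hI1]
    exact Finset.sum_congr rfl fun a _ => (hmI a).symm
  have hprod : ∑ a, ∑ b, mI a * mV b = 1 := by
    simp_rw [← Finset.mul_sum, hV1, mul_one]
    exact hI1
  have hterm : ∀ a b : S,
      j a b * Real.log (c a b) - mI a * mV b * Real.log (c a b)
        - j a b * Real.log (j a b / (mI a * mV b))
        - mI a * mV b * Real.log (mI a * mV b / j a b)
      = (j a b - mI a * mV b) * Real.log (mI a) := by
    intro a b
    have hxy : (0:ℝ) < mI a * mV b := mul_pos (mIpos a) (mVpos b)
    have hc : Real.log (c a b) = Real.log (j a b) - Real.log (mV b) := by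
      simp only [c]
      exact Real.log_div (jpos a b).ne' (mVpos b).ne'
    rw [hc, Real.log_div (jpos a b).ne' hxy.ne', Real.log_div hxy.ne' (jpos a b).ne',
      Real.log_mul (mIpos a).ne' (mVpos b).ne']
    ring
  have expand : club - (mi + kl) = ∑ a, ∑ b,
      (j a b * Real.log (c a b) - mI a * mV b * Real.log (c a b)
        - j a b * Real.log (j a b / (mI a * mV b))
        - mI a * mV b * Real.log (mI a * mV b / j a b)) := by
    simp only [club, mi, kl, Finset.sum_sub_distrib]
    ring
  have hzero : (∑ a, ∑ b,
      (j a b * Real.log (c a b) - mI a * mV b * Real.log (c a b)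
        - j a b * Real.log (j a b / (mI a * mV b))
        - mI a * mV b * Real.log (mI a * mV b / j a b))) = 0 := by
    apply Finset.sum_eq_zero
    intro a _
    rw [Finset.sum_congr rfl (fun b _ => hterm a b), ← Finset.sum_mul,
      Finset.sum_sub_distrib, ← hmI a, ← Finset.mul_sum, hV1, mul_one, sub_self, zero_mul]
  have hclub : club = mi + kl := by
    rw [hzero] at expand
    linarith [expand]
  have hterm2 : ∀ a b : S, mI a * mV b - j a b ≤ (mI a * mV b) * Real.log ((mI a * mV b) / j a b) := by
    intro a b
    set x := mI a * mV b with hx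
    set y := j a b with hy
    have hxpos : (0:ℝ) < x := mul_pos (mIpos a) (mVpos b)
    have hypos : (0:ℝ) < y := jpos a b
    have hlog := Real.log_le_sub_one_of_pos (div_pos hypos hxpos)
    have hxlog : x * Real.log (y / x) ≤ x * (y / x - 1) :=
      mul_le_mul_of_nonneg_left hlog hxpos.le
    have h3 : x * (y / x - 1) = y - x := by field_simp
    have h4 : Real.log (x / y) = - Real.log (y / x) := by
      rw [← Real.log_inv, inv_div]
    rw [h4, mul_neg]
    linarith
  have hkl : 0 ≤ kl := by
    have h1 : ∑ a, ∑ b, (mI a * mV b - j a b) ≤ kl := by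
      simp only [kl]
      exact Finset.sum_le_sum fun a _ => Finset.sum_le_sum fun b _ => hterm2 a b
    have h2 : ∑ a, ∑ b, (mI a * mV b - j a b) = 0 := by
      simp only [Finset.sum_sub_distrib, hprod, hj1, sub_self]
    linarith
  exact ⟨hclub, by linarith⟩
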